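/- arXiv:math/0507065 — 2 statements merged into one kernel-verified Lean document; each statement's English description precedes it below -/
import Mathlib

section
/- Let $\alpha=\{\alpha_n\}$ be a strictly increasing, bounded, positive sequence such that $W_\alpha$ is 2-hyponormal, and set $u_n = \alpha_n^2-\alpha_{n-1}^2$, $v_n = \alpha_n^2\alpha_{n+1}^2-\alpha_{n-1}^2\alpha_{n-2}^2$ (with $\alpha_{-1}=\alpha_{-2}=0$). Then the sequence $k_n := v_n/u_n$ ($n\ge 2$) is bounded. -/
/-- The moments `γ n = α₀² ⋯ α_{n-1}²` of a weighted shift. -/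
noncomputable def gam (α : ℕ → ℝ) (n : ℕ) : ℝ := ∏ k ∈ Finset.range n, α k ^ 2

/-- `W_α` is `k`-hyponormal iff all `(k+1) × (k+1)` Hankel moment matrices are PSD. -/
def KHyponormal (k : ℕ) (α : ℕ → ℝ) : Prop :=
  ∀ n : ℕ, (Matrix.of fun i j : Fin (k + 1) => gam α (n + i + j)).PosSemidef

/-- Extension of the weight sequence by `α₋₁ = α₋₂ = 0`. -/
noncomputable def ae (α : ℕ → ℝ) : ℤ → ℝ := fun n => if 0 ≤ n then α n.toNat else 0

noncomputable def uu (α : ℕ → ℝ) (n : ℕ) : ℝ := ae α n ^ 2 - ae α ((n : ℤ) - 1) ^ 2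

noncomputable def vv (α : ℕ → ℝ) (n : ℕ) : ℝ :=
  ae α n ^ 2 * ae α ((n : ℤ) + 1) ^ 2 - ae α ((n : ℤ) - 1) ^ 2 * ae α ((n : ℤ) - 2) ^ 2

noncomputable def ww (α : ℕ → ℝ) (n : ℕ) : ℝ :=
  ae α n ^ 2 * (ae α ((n : ℤ) + 1) ^ 2 - ae α ((n : ℤ) - 1) ^ 2) ^ 2

noncomputable def pp (α : ℕ → ℝ) (n : ℕ) : ℝ := uu α n * vv α (n + 1) - ww α n

/- ### Auxiliary machinery -/

lemma ae_nat (α : ℕ → ℝ) (n : ℕ) : ae α (n : ℤ) = α n := by simp [ae]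

lemma pp_eval (α : ℕ → ℝ) (n : ℕ) : pp α (n + 1) =
    (α (n+1)^2 - α n^2) * (α (n+2)^2 * α (n+3)^2 - α (n+1)^2 * α n ^2)
      - α (n+1)^2 * (α (n+2)^2 - α n^2)^2 := by
  have e1 : ((n+1:ℕ):ℤ) - 1 = ((n:ℕ):ℤ) := by push_cast; ring
  have e2 : ((n+2:ℕ):ℤ) + 1 = ((n+3:ℕ):ℤ) := by push_cast; ring
  have e3 : ((n+2:ℕ):ℤ) - 1 = ((n+1:ℕ):ℤ) := by push_cast; ring
  have e4 : ((n+2:ℕ):ℤ) - 2 = ((n:ℕ):ℤ) := by push_cast; ring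
  have e5 : ((n+1:ℕ):ℤ) + 1 = ((n+2:ℕ):ℤ) := by push_cast; ring
  have h21 : (n:ℕ) + 1 + 1 = n + 2 := by ring
  unfold pp uu vv ww
  rw [h21, e1, e2, e3, e4, e5]; simp only [ae_nat]

lemma uu_eval (α : ℕ → ℝ) (n : ℕ) : uu α (n + 1) = α (n+1)^2 - α n^2 := by
  have e1 : ((n+1:ℕ):ℤ) - 1 = ((n:ℕ):ℤ) := by push_cast; ring
  unfold uu
  rw [e1]; simp only [ae_nat]

lemma vv_eval (α : ℕ → ℝ) (n : ℕ) : vv α (n + 2) =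
    α (n+2)^2 * α (n+3)^2 - α (n+1)^2 * α n ^ 2 := by
  have e2 : ((n+2:ℕ):ℤ) + 1 = ((n+3:ℕ):ℤ) := by push_cast; ring
  have e3 : ((n+2:ℕ):ℤ) - 1 = ((n+1:ℕ):ℤ) := by push_cast; ring
  have e4 : ((n+2:ℕ):ℤ) - 2 = ((n:ℕ):ℤ) := by push_cast; ring
  unfold vv
  rw [e2, e3, e4]; simp only [ae_nat]

lemma det_eq (α : ℕ → ℝ) (n : ℕ) :
    (Matrix.of fun i j : Fin 3 => gam α (n + i + j)).det
      = gam α n ^ 3 * α n ^ 4 * α (n+1) ^ 2 * pp α (n+1) := by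
  have g1 : gam α (n+1) = gam α n * α n ^ 2 := Finset.prod_range_succ _ _
  have g2 : gam α (n+2) = gam α (n+1) * α (n+1) ^ 2 := Finset.prod_range_succ _ _
  have g3 : gam α (n+3) = gam α (n+2) * α (n+2) ^ 2 := Finset.prod_range_succ _ _
  have g4 : gam α (n+4) = gam α (n+3) * α (n+3) ^ 2 := Finset.prod_range_succ _ _
  rw [pp_eval]
  rw [Matrix.det_fin_three]
  simp only [Matrix.of_apply, Fin.val_zero, Fin.val_one, Fin.val_two]
  norm_num
  rw [g4, g3, g2, g1]
  ring

lemma psd_det_nonneg {k : ℕ} {M : Matrix (Fin k) (Fin k) ℝ} (h : M.PosSemidef) :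
    0 ≤ M.det := by
  rw [h.isHermitian.det_eq_prod_eigenvalues]
  exact Finset.prod_nonneg fun i _ => h.eigenvalues_nonneg i

noncomputable def Usq (α : ℕ → ℝ) (n : ℕ) : ℝ := α (n+1)^2 - α n^2

noncomputable def rr (α : ℕ → ℝ) (n : ℕ) : ℝ := Usq α (n+1) / Usq α n

lemma Usq_pos {α : ℕ → ℝ} (hpos : ∀ n, 0 < α n) (hmono : StrictMono α) (n : ℕ) :
    0 < Usq α n := by
  have := hmono (Nat.lt_succ_self n)
  have h0 := hpos n
  unfold Usq; nlinarith

lemma pp_nonneg {α : ℕ → ℝ} (hpos : ∀ n, 0 < α n) (h2 : KHyponormal 2 α) (n : ℕ) :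
    0 ≤ pp α (n + 1) := by
  have hdet := psd_det_nonneg (h2 n)
  rw [det_eq] at hdet
  have hg : 0 < gam α n := Finset.prod_pos fun k _ => pow_pos (hpos k) 2
  have hP : 0 < gam α n ^ 3 * α n ^ 4 * α (n+1) ^ 2 :=
    mul_pos (mul_pos (pow_pos hg 3) (pow_pos (hpos n) 4)) (pow_pos (hpos _) 2)
  nlinarith [hdet, hP]

lemma key_ratio {α : ℕ → ℝ} (hpos : ∀ n, 0 < α n) (hmono : StrictMono α)
    (h2 : KHyponormal 2 α) (n : ℕ) :
    rr α n + 1 - α (n+3)^2 / α (n+1)^2 ≤ rr α (n+1) := by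
  have hpp := pp_nonneg hpos h2 n
  rw [pp_eval] at hpp
  have key : α (n+1)^2 * Usq α (n+1)^2 + α (n+1)^2 * (Usq α n * Usq α (n+1))
      ≤ α (n+1)^2 * (Usq α n * Usq α (n+2)) + α (n+3)^2 * (Usq α n * Usq α (n+1)) := by
    unfold Usq; nlinarith [hpp]
  have hU0 := Usq_pos hpos hmono n
  have hU1 := Usq_pos hpos hmono (n+1)
  have hb : (0:ℝ) < α (n+1)^2 := pow_pos (hpos _) 2
  have hx : Usq α (n+1) = rr α n * Usq α n := (div_mul_cancel₀ _ (ne_of_gt hU0)).symm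
  have hy : Usq α (n+2) = rr α (n+1) * Usq α (n+1) := (div_mul_cancel₀ _ (ne_of_gt hU1)).symm
  have ht : α (n+3)^2 = (α (n+3)^2 / α (n+1)^2) * α (n+1)^2 :=
    (div_mul_cancel₀ _ (ne_of_gt hb)).symm
  set x := rr α n
  set y := rr α (n+1)
  set t := α (n+3)^2 / α (n+1)^2
  have hxpos : 0 < x := div_pos hU1 hU0
  rw [hy] at key
  rw [hx] at key
  rw [ht] at key
  have hfac : 0 < α (n+1)^2 * x * Usq α n ^ 2 := by positivity
  have hfac2 : 0 < α (n+1)^2 * Usq α n ^ 2 := by positivity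
  nlinarith [key, hfac, hfac2, mul_pos hU0 hxpos]

theorem stmt_10 (α : ℕ → ℝ) (hpos : ∀ n, 0 < α n) (hmono : StrictMono α)
    (hbdd : BddAbove (Set.range α)) (h2 : KHyponormal 2 α) :
    ∃ M : ℝ, ∀ n : ℕ, 2 ≤ n → vv α n / uu α n ≤ M := by
  classical
  obtain ⟨C, hC⟩ := hbdd
  have hCb : ∀ n, α n ≤ C := fun n => hC ⟨n, rfl⟩
  have hC0 : 0 < C := lt_of_lt_of_le (hpos 0) (hCb 0)
  have hsq : ∀ n, α n ^ 2 ≤ C ^ 2 := fun n => pow_le_pow_left₀ (hpos n).le (hCb n) 2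
  set A := α 0 ^ 2 with hAdef
  have hA : 0 < A := pow_pos (hpos 0) 2
  have hAle : ∀ n, A ≤ α n ^ 2 := by
    intro n
    exact pow_le_pow_left₀ (hpos 0).le (hmono.monotone (Nat.zero_le n)) 2
  have hUpos : ∀ n, 0 < Usq α n := Usq_pos hpos hmono
  have hUb : ∀ n, Usq α n ≤ C ^ 2 := by
    intro n
    have := hsq (n+1); have h0 := pow_pos (hpos n) 2
    unfold Usq; linarith
  have hrpos : ∀ n, 0 < rr α n := fun n => div_pos (hUpos (n+1)) (hUpos n)
  have key : ∀ n, rr α n + 1 - α (n+3)^2 / α (n+1)^2 ≤ rr α (n+1) :=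
    key_ratio hpos hmono h2
  -- additive step with uniform denominator A
  have key2 : ∀ n, rr α n - (α (n+3)^2 - α (n+1)^2) / A ≤ rr α (n+1) := by
    intro n
    have hb : (0:ℝ) < α (n+1)^2 := pow_pos (hpos _) 2
    have hdb : α (n+1)^2 ≤ α (n+3)^2 :=
      pow_le_pow_left₀ (hpos _).le (hmono.monotone (by omega : n+1 ≤ n+3)) 2
    have h1 : α (n+3)^2 / α (n+1)^2 - 1 = (α (n+3)^2 - α (n+1)^2) / α (n+1)^2 := by
      rw [sub_div, div_self (ne_of_gt hb)]
    have h2' : (α (n+3)^2 - α (n+1)^2) / α (n+1)^2 ≤ (α (n+3)^2 - α (n+1)^2) / A := by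
      apply div_le_div_of_nonneg_left (by linarith) hA (hAle _)
    have := key n
    linarith
  -- telescoped version
  have tele : ∀ m j, rr α m -
      (α (m+j+2)^2 + α (m+j+1)^2 - α (m+2)^2 - α (m+1)^2) / A ≤ rr α (m+j) := by
    intro m j
    induction j with
    | zero =>
      have : (α (m+0+2)^2 + α (m+0+1)^2 - α (m+2)^2 - α (m+1)^2) = 0 := by
        norm_num
      rw [this]
      simp
    | succ j ih =>
      have hk := key2 (m + j)
      have egoal : m + (j+1) = m + j + 1 := by omega
      rw [egoal]
      have e1 : m + j + 1 + 2 = m + j + 3 := by omega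
      have e2 : m + j + 1 + 1 = m + j + 2 := by omega
      rw [e1, e2]
      have hsum : (α (m+j+3)^2 + α (m+j+2)^2 - α (m+2)^2 - α (m+1)^2)
          = (α (m+j+2)^2 + α (m+j+1)^2 - α (m+2)^2 - α (m+1)^2)
            + (α (m+j+3)^2 - α (m+j+1)^2) := by ring
      rw [hsum, add_div]
      have hk' : rr α (m+j) - (α (m+j+3)^2 - α (m+j+1)^2) / A ≤ rr α (m+j+1) := by
        have e3 : m + j + 3 = m + j + 2 + 1 := by omega
        have e4 : m + j + 1 + 1 = m + j + 2 := by omega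
        convert hk using 3 <;> omega
      linarith
  -- uniform tail bound (since squares ≤ C²  and α increasing)
  have tail : ∀ m j, rr α m - 2 * C^2 / A ≤ rr α (m+j) := by
    intro m j
    have h := tele m j
    have h1 := hsq (m+j+2); have h2' := hsq (m+j+1)
    have h3 : 0 < α (m+2)^2 := pow_pos (hpos _) 2
    have h4 : 0 < α (m+1)^2 := pow_pos (hpos _) 2
    have : (α (m+j+2)^2 + α (m+j+1)^2 - α (m+2)^2 - α (m+1)^2) / A ≤ 2 * C^2 / A :=
      (div_le_div_iff_of_pos_right hA).mpr (by linarith)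
    linarith
  -- Step D : upper bound for rr
  set R := 1 + 2 * C^2 / A with hRdef
  have hRpos : 0 < R := by positivity
  have hub : ∀ n, rr α n ≤ R := by
    intro m
    by_contra hcon
    push_neg at hcon
    set q := rr α m - 2 * C^2 / A with hqdef
    have hq1 : 1 < q := by
      have : R < rr α m := hcon
      rw [hRdef] at this
      simp only [hqdef]; linarith
    have hgrow : ∀ j, q ^ j * Usq α m ≤ Usq α (m + j) := by
      intro j
      induction j with
      | zero => simp
      | succ j ih =>
        have hr : q ≤ rr α (m + j) := tail m j
        have hUmj := hUpos (m + j)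
        have : Usq α (m + j + 1) = rr α (m + j) * Usq α (m + j) :=
          (div_mul_cancel₀ _ (ne_of_gt hUmj)).symm
        have e : m + (j+1) = m + j + 1 := by omega
        rw [e, this]
        calc q ^ (j+1) * Usq α m = q * (q ^ j * Usq α m) := by ring
        _ ≤ q * Usq α (m + j) := by
            apply mul_le_mul_of_nonneg_left ih (by linarith)
        _ ≤ rr α (m + j) * Usq α (m + j) :=
            mul_le_mul_of_nonneg_right hr hUmj.le
    obtain ⟨j, hj⟩ := pow_unbounded_of_one_lt (C^2 / Usq α m) hq1
    have hUm := hUpos m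
    have : C^2 < q ^ j * Usq α m := by
      rw [div_lt_iff₀ hUm] at hj
      linarith
    have := lt_of_lt_of_le this (hgrow j)
    exact absurd (hUb (m+j)) (not_le.mpr this)
  -- Step E : lower bound for rr
  set L := sSup (Set.range fun n => α n ^ 2) with hLdef
  have hbddsq : BddAbove (Set.range fun n => α n ^ 2) := ⟨C^2, by
    rintro x ⟨n, rfl⟩; exact hsq n⟩
  have hLle : ∀ n, α n ^ 2 ≤ L := fun n => le_csSup hbddsq ⟨n, rfl⟩
  have happrox : ∀ ε : ℝ, 0 < ε → ∃ N, ∀ n, N ≤ n → L - ε < α n ^ 2 := by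
    intro ε hε
    obtain ⟨x, ⟨N, rfl⟩, hx⟩ := exists_lt_of_lt_csSup
      (Set.range_nonempty _) (show L - ε < L by linarith [hLle 0, hε])
    refine ⟨N, fun n hn => lt_of_lt_of_le hx ?_⟩
    exact pow_le_pow_left₀ (hpos N).le (hmono.monotone hn) 2
  obtain ⟨N₀, hN₀⟩ := happrox (A/8) (by positivity)
  have existsN : ∃ N, 2 * (L - α (N+1)^2) / A < rr α N := by
    by_contra hcon
    push_neg at hcon
    have hhalf : ∀ s, N₀ ≤ s → rr α s ≤ 1/2 := by
      intro s hs
      have h1 := hcon s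
      have h2 : L - α (s+1)^2 < A/8 := by
        have := hN₀ (s+1) (by omega); linarith
      have h3 : 2 * (L - α (s+1)^2) / A ≤ 1/2 := by
        rw [div_le_iff₀ hA]; linarith
      linarith
    have hgeo : ∀ s, N₀ ≤ s → Usq α (s+1) ≤ Usq α s / 2 := by
      intro s hs
      have h := hhalf s hs
      have hU := hUpos s
      unfold rr at h
      rw [div_le_iff₀ hU] at h
      linarith
    have hinv : ∀ s, N₀ ≤ s → ∀ i, α (s+i)^2 + 2*Usq α (s+i) ≤ α s^2 + 2*Usq α s := by
      intro s hs i
      induction i with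
      | zero => simp
      | succ i ih =>
        have hg := hgeo (s+i) (by omega)
        have e : s+(i+1) = s+i+1 := by omega
        rw [e]
        have hUd : α (s+i+1)^2 = α (s+i)^2 + Usq α (s+i) := by unfold Usq; ring
        linarith
    have hLb : ∀ s, N₀ ≤ s → L ≤ α s^2 + 2*Usq α s := by
      intro s hs
      apply csSup_le (Set.range_nonempty _)
      rintro x ⟨n, rfl⟩
      dsimp only
      by_cases hn : n ≤ s
      · have h1 : α n ^2 ≤ α s^2 := pow_le_pow_left₀ (hpos n).le (hmono.monotone hn) 2
        have := hUpos s; linarith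
      · push_neg at hn
        have e : n = s + (n - s) := by omega
        rw [e]
        have h1 := hinv s hs (n - s)
        have h2 := hUpos (s + (n-s)); linarith
    have hfin : ∀ N, N₀ ≤ N → A ≤ 4 * Usq α N := by
      intro N hN
      have h1 := hcon N
      have h2 := hLb (N+1) (by omega)
      have h3 : rr α N ≤ 4 * Usq α (N+1) / A := by
        refine le_trans h1 ?_
        have hud : α (N+1+1)^2 = α (N+1)^2 + Usq α (N+1) := by unfold Usq; ring
        exact (div_le_div_iff_of_pos_right hA).mpr (by linarith)
      have hU := hUpos N
      have hU1 := hUpos (N+1)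
      unfold rr at h3
      rw [div_le_div_iff₀ hU hA] at h3
      nlinarith [h3, hU1]
    have hsmall : Usq α N₀ < A / 8 := by
      have h1 := hN₀ N₀ (le_refl _)
      have h2 := hLle (N₀+1)
      unfold Usq; linarith
    have := hfin N₀ (le_refl _)
    linarith
  obtain ⟨N, hN⟩ := existsN
  set c1 := rr α N - 2*(L - α (N+1)^2)/A with hc1def
  have hc1pos : 0 < c1 := by simp only [hc1def]; linarith
  have hlow1 : ∀ n, N ≤ n → c1 ≤ rr α n := by
    intro n hn
    have h := tele N (n - N)
    have e : N + (n - N) = n := by omega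
    rw [e] at h
    have b1 := hLle (n+2)
    have b2 := hLle (n+1)
    have b3 : α (N+1)^2 ≤ α (N+2)^2 :=
      pow_le_pow_left₀ (hpos _).le (hmono.monotone (by omega : N+1 ≤ N+2)) 2
    have hs : (α (n+2)^2 + α (n+1)^2 - α (N+2)^2 - α (N+1)^2)/A
        ≤ 2*(L - α (N+1)^2)/A := (div_le_div_iff_of_pos_right hA).mpr (by linarith)
    simp only [hc1def]
    linarith
  have hrange : (Finset.range (N+1)).Nonempty := ⟨0, by simp⟩
  set c2 := (Finset.range (N+1)).inf' hrange (rr α) with hc2def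
  have hc2pos : 0 < c2 := by
    rw [hc2def, Finset.lt_inf'_iff]
    exact fun i _ => hrpos i
  set c := min c1 c2 with hcdef
  have hcpos : 0 < c := lt_min hc1pos hc2pos
  have hlow : ∀ n, c ≤ rr α n := by
    intro n
    by_cases hn : N ≤ n
    · exact le_trans (min_le_left _ _) (hlow1 n hn)
    · refine le_trans (min_le_right _ _) ?_
      exact Finset.inf'_le _ (by simp only [Finset.mem_range]; omega)
  -- final assembly
  refine ⟨C^2*(2 + 1/c + R), ?_⟩
  intro n hn
  obtain ⟨m, rfl⟩ : ∃ m, n = m + 2 := ⟨n - 2, by omega⟩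
  have huu : uu α (m+2) = Usq α (m+1) := by
    have := uu_eval α (m+1)
    rw [show m+1+1 = m+2 from rfl] at this
    rw [this]; unfold Usq; rfl
  have hvv : vv α (m+2) = α (m+3)^2 * Usq α (m+1) + α (m+1)^2 * Usq α m
      + α (m+1)^2 * Usq α (m+1) + α (m+1)^2 * Usq α (m+2) := by
    rw [vv_eval]; unfold Usq; ring
  have hUm' : Usq α m ≤ (1/c) * Usq α (m+1) := by
    have h := hlow m
    unfold rr at h
    rw [le_div_iff₀ (hUpos m)] at h
    rw [one_div, inv_mul_eq_div, le_div_iff₀ hcpos, mul_comm]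
    exact h
  have hUm2 : Usq α (m+2) ≤ R * Usq α (m+1) := by
    have h := hub (m+1)
    unfold rr at h
    rw [div_le_iff₀ (hUpos (m+1))] at h
    linarith
  have hb1 : α (m+3)^2 * Usq α (m+1) ≤ C^2 * Usq α (m+1) :=
    mul_le_mul_of_nonneg_right (hsq _) (hUpos _).le
  have hb2 : α (m+1)^2 * Usq α m ≤ C^2 * ((1/c) * Usq α (m+1)) :=
    mul_le_mul (hsq _) hUm' (hUpos m).le (by positivity)
  have hb3 : α (m+1)^2 * Usq α (m+1) ≤ C^2 * Usq α (m+1) :=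
    mul_le_mul_of_nonneg_right (hsq _) (hUpos _).le
  have hb4 : α (m+1)^2 * Usq α (m+2) ≤ C^2 * (R * Usq α (m+1)) := by
    refine mul_le_mul (hsq _) hUm2 (hUpos _).le (by positivity)
  rw [huu, div_le_iff₀ (hUpos (m+1)), hvv]
  have hM : C^2*(2 + 1/c + R) * Usq α (m+1) = C^2 * Usq α (m+1) + C^2 * Usq α (m+1)
      + C^2 * ((1/c) * Usq α (m+1)) + C^2 * (R * Usq α (m+1)) := by ring
  clear_value R L c1 c2 c
  linarith [hb1, hb2, hb3, hb4, hM]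
end

section
/- Let $\mu$ be the Berger measure of a subnormal weighted shift $W_\alpha$ on $[0,\|W_\alpha\|^2]$, and let $x_1,\dots,x_n > 0$. Then the $n$-step extension $W_{(x_n,\dots,x_1)\alpha}$ (the weighted shift with weights $x_n,\dots,x_1,\alpha_0,\alpha_1,\dots$) is subnormal if and only if: (i) $1/t^n \in L^1(\mu)$; (ii) $x_j^2 = \frac{\int t^{-(j-1)}\,d\mu}{\int t^{-j}\,d\mu}$ for $1 \le j \le n-1$; and (iii) $x_n^2 \le \frac{\int t^{-(n-1)}\,d\mu}{\int t^{-n}\,d\mu}$. -/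
open MeasureTheory

/-- `μ` is the Berger measure of the weighted shift `W_α`. -/
def IsBergerMeasure (α : ℕ → ℝ) (μ : Measure ℝ) : Prop :=
  IsProbabilityMeasure μ ∧ μ (Set.Icc 0 (⨆ n, α n ^ 2))ᶜ = 0 ∧
    ∀ n : ℕ, gam α n = ∫ t, t ^ n ∂μ

/-- Berger's characterization of subnormality of the weighted shift. -/
def BergerSubnormal (α : ℕ → ℝ) : Prop := ∃ μ : Measure ℝ, IsBergerMeasure α μ

/-- The `n`-step extension `W_{(x_n,…,x_1)α}`: prepend the weights `x_n, …, x_1`. -/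
noncomputable def extSeq (n : ℕ) (x : ℕ → ℝ) (α : ℕ → ℝ) : ℕ → ℝ :=
  fun k => if k < n then x (n - k) else α (k - n)


section Helpers



section Determinacy

variable {μ : Measure ℝ}

lemma integrable_of_ae_bound' [IsFiniteMeasure μ] {f : ℝ → ℝ} (C : ℝ)
    (hm : AEStronglyMeasurable f μ) (h : ∀ᵐ t ∂μ, ‖f t‖ ≤ C) : Integrable f μ :=
  ⟨hm, HasFiniteIntegral.of_bounded h⟩

lemma integrable_pow_of_ae_Icc [IsFiniteMeasure μ] {a b : ℝ}
    (hs : ∀ᵐ t ∂μ, t ∈ Set.Icc a b) (k : ℕ) : Integrable (fun t => t ^ k) μ := by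
  refine integrable_of_ae_bound' ((max |a| |b|) ^ k)
    ((measurable_id.pow_const k).aestronglyMeasurable) ?_
  filter_upwards [hs] with t ht
  rw [Real.norm_eq_abs, abs_pow]
  exact pow_le_pow_left₀ (abs_nonneg t) (abs_le_max_abs_abs ht.1 ht.2) k

lemma integral_cont_eq {μ ν : Measure ℝ} [IsFiniteMeasure μ] [IsFiniteMeasure ν] {a b : ℝ}
    (hμs : ∀ᵐ t ∂μ, t ∈ Set.Icc a b) (hνs : ∀ᵐ t ∂ν, t ∈ Set.Icc a b)
    (h : ∀ k : ℕ, ∫ t, t ^ k ∂μ = ∫ t, t ^ k ∂ν)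
    (f : ℝ → ℝ) (hf : Continuous f) (C : ℝ) (hC : ∀ t, ‖f t‖ ≤ C) :
    ∫ t, f t ∂μ = ∫ t, f t ∂ν := by
  have hpoly : ∀ q : Polynomial ℝ, ∫ t, q.eval t ∂μ = ∫ t, q.eval t ∂ν := by
    intro q
    have e1 : ∀ (ρ : Measure ℝ), (∀ᵐ t ∂ρ, t ∈ Set.Icc a b) → IsFiniteMeasure ρ →
        ∫ t, q.eval t ∂ρ =
          ∑ i ∈ Finset.range (q.natDegree + 1), q.coeff i * ∫ t, t ^ i ∂ρ := by
      intro ρ hρ _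
      have : ∫ t, q.eval t ∂ρ =
          ∫ t, ∑ i ∈ Finset.range (q.natDegree + 1), q.coeff i * t ^ i ∂ρ := by
        congr 1; funext t; exact q.eval_eq_sum_range t
      rw [this, integral_finset_sum _ fun i _ => (integrable_pow_of_ae_Icc hρ i).const_mul _]
      simp_rw [integral_const_mul]
    rw [e1 μ hμs ‹_›, e1 ν hνs ‹_›]
    simp_rw [h]
  have hfiμ : Integrable f μ := ⟨hf.aestronglyMeasurable, HasFiniteIntegral.of_bounded
    (ae_of_all _ hC)⟩
  have hfiν : Integrable f ν := ⟨hf.aestronglyMeasurable, HasFiniteIntegral.of_bounded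
    (ae_of_all _ hC)⟩
  have key : ∀ ε > (0:ℝ), |∫ t, f t ∂μ - ∫ t, f t ∂ν| ≤
      ε * ((μ Set.univ).toReal + (ν Set.univ).toReal) := by
    intro ε hε
    set g : C(Set.Icc a b, ℝ) := (ContinuousMap.mk f hf).restrict (Set.Icc a b)
    have hg := continuousMap_mem_polynomialFunctions_closure a b g
    have hg' : g ∈ closure (polynomialFunctions (Set.Icc a b) : Set C(Set.Icc a b, ℝ)) := hg
    obtain ⟨p, hp_mem, hdist⟩ := Metric.mem_closure_iff.mp hg' ε hε
    rw [polynomialFunctions_coe] at hp_mem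
    obtain ⟨q, rfl⟩ := hp_mem
    have hb : ∀ t ∈ Set.Icc a b, |f t - q.eval t| ≤ ε := by
      intro t ht
      have := ContinuousMap.dist_apply_le_dist (f := g)
        (g := Polynomial.toContinuousMapOnAlgHom (Set.Icc a b) q) ⟨t, ht⟩
      have h2 : dist (f t) (q.eval t) ≤ ε := le_trans this hdist.le
      simpa [Real.dist_eq] using h2
    have est : ∀ (ρ : Measure ℝ), (∀ᵐ t ∂ρ, t ∈ Set.Icc a b) → IsFiniteMeasure ρ →
        Integrable f ρ →
        |∫ t, f t ∂ρ - ∫ t, q.eval t ∂ρ| ≤ ε * (ρ Set.univ).toReal := by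
      intro ρ hρs _ hfi
      have hqi : Integrable (fun t => q.eval t) ρ := by
        have : (fun t => q.eval t) =
            fun t => ∑ i ∈ Finset.range (q.natDegree + 1), q.coeff i * t ^ i := by
          funext t; exact q.eval_eq_sum_range t
        rw [this]
        exact integrable_finset_sum _ fun i _ => (integrable_pow_of_ae_Icc hρs i).const_mul _
      rw [← integral_sub hfi hqi]
      calc |∫ t, (f t - q.eval t) ∂ρ| ≤ ∫ t, |f t - q.eval t| ∂ρ := by
            simpa [Real.norm_eq_abs] using
              norm_integral_le_integral_norm (fun t => f t - q.eval t) (μ := ρ)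
        _ ≤ ∫ _t, ε ∂ρ := by
            refine integral_mono_ae (hfi.sub hqi).abs (integrable_const ε) ?_
            filter_upwards [hρs] with t ht
            exact hb t ht
        _ = ε * (ρ Set.univ).toReal := by simp [mul_comm, measureReal_def]
    have e1 := est μ hμs ‹_› hfiμ
    have e2 := est ν hνs ‹_› hfiν
    calc |∫ t, f t ∂μ - ∫ t, f t ∂ν|
        = |(∫ t, f t ∂μ - ∫ t, q.eval t ∂μ) -
            (∫ t, f t ∂ν - ∫ t, q.eval t ∂ν)| := by rw [hpoly q]; ring_nf
      _ ≤ |∫ t, f t ∂μ - ∫ t, q.eval t ∂μ| + |∫ t, f t ∂ν - ∫ t, q.eval t ∂ν| :=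
          abs_sub _ _
      _ ≤ ε * (μ Set.univ).toReal + ε * (ν Set.univ).toReal := add_le_add e1 e2
      _ = ε * ((μ Set.univ).toReal + (ν Set.univ).toReal) := by ring
  by_contra hne
  have habs : 0 < |∫ t, f t ∂μ - ∫ t, f t ∂ν| := abs_pos.mpr (sub_ne_zero.mpr hne)
  set D := (μ Set.univ).toReal + (ν Set.univ).toReal with hD
  have hD0 : 0 ≤ D := add_nonneg ENNReal.toReal_nonneg ENNReal.toReal_nonneg
  have hε : (0:ℝ) < |∫ t, f t ∂μ - ∫ t, f t ∂ν| / (2 * (D + 1)) := by positivity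
  have := key _ hε
  have hlt : |∫ t, f t ∂μ - ∫ t, f t ∂ν| / (2 * (D + 1)) * D <
      |∫ t, f t ∂μ - ∫ t, f t ∂ν| := by
    rw [div_mul_eq_mul_div, div_lt_iff₀ (by positivity)]
    nlinarith
  linarith

/-- **Moment determinacy on a compact interval**: two finite measures supported on `[a,b]`
with equal moments are equal. -/
lemma ext_of_moments {μ ν : Measure ℝ} [IsFiniteMeasure μ] [IsFiniteMeasure ν] {a b : ℝ}
    (hμs : ∀ᵐ t ∂μ, t ∈ Set.Icc a b) (hνs : ∀ᵐ t ∂ν, t ∈ Set.Icc a b)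
    (h : ∀ k : ℕ, ∫ t, t ^ k ∂μ = ∫ t, t ^ k ∂ν) : μ = ν := by
  apply ext_of_forall_lintegral_eq_of_IsFiniteMeasure
  intro f
  obtain ⟨C, hC⟩ := f.bounded
  have hbd : ∀ x : ℝ, ((f x : ℝ)) ≤ (f 0 : ℝ) + C := by
    intro x
    have h1 := hC x 0
    rw [NNReal.dist_eq] at h1
    have h2 := abs_le.mp h1
    linarith [h2.2]
  have hfin : ∀ (ρ : Measure ℝ), IsFiniteMeasure ρ → ∫⁻ x, f x ∂ρ ≠ ⊤ := by
    intro ρ _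
    have hb : ∀ x, (f x : ENNReal) ≤ ENNReal.ofReal ((f 0 : ℝ) + C) := by
      intro x
      rw [← ENNReal.ofReal_coe_nnreal]
      exact ENNReal.ofReal_le_ofReal (hbd x)
    have h3 : ∫⁻ x, f x ∂ρ ≤ ∫⁻ _x, ENNReal.ofReal ((f 0 : ℝ) + C) ∂ρ := lintegral_mono hb
    rw [lintegral_const] at h3
    exact (lt_of_le_of_lt h3
      (ENNReal.mul_lt_top ENNReal.ofReal_lt_top (measure_lt_top ρ _))).ne
  have h1 : ∫ x, ((f x : ℝ)) ∂μ = ∫ x, ((f x : ℝ)) ∂ν := by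
    refine integral_cont_eq hμs hνs h _ (NNReal.continuous_coe.comp f.continuous)
      ((f 0 : ℝ) + C) ?_
    intro t
    rw [Real.norm_eq_abs, abs_of_nonneg (f t).coe_nonneg]
    exact hbd t
  rw [← ENNReal.toReal_eq_toReal_iff' (hfin μ ‹_›) (hfin ν ‹_›),
    BoundedContinuousFunction.toReal_lintegral_coe_eq_integral,
    BoundedContinuousFunction.toReal_lintegral_coe_eq_integral]
  exact h1

end Determinacy


lemma gam_succ (α : ℕ → ℝ) (k : ℕ) : gam α (k + 1) = gam α k * α k ^ 2 :=
  Finset.prod_range_succ _ _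

lemma gam_pos {α : ℕ → ℝ} (hpos : ∀ k, 0 < α k) (k : ℕ) : 0 < gam α k :=
  Finset.prod_pos fun i _ => pow_pos (hpos i) 2

lemma gam_add (α : ℕ → ℝ) (n m : ℕ) (x : ℕ → ℝ) :
    gam (extSeq n x α) (n + m) = gam (extSeq n x α) n * gam α m := by
  unfold gam
  rw [Finset.prod_range_add]
  congr 1
  refine Finset.prod_congr rfl fun k _ => ?_
  simp [extSeq]

lemma extSeq_ge (n : ℕ) (x α : ℕ → ℝ) (k : ℕ) (hk : n ≤ k) :
    extSeq n x α k = α (k - n) := by simp [extSeq, Nat.not_lt.mpr hk]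

lemma extSeq_lt (n : ℕ) (x α : ℕ → ℝ) (k : ℕ) (hk : k < n) :
    extSeq n x α k = x (n - k) := by simp [extSeq, hk]

lemma extSeq_pos {n : ℕ} {x α : ℕ → ℝ} (hpos : ∀ k, 0 < α k)
    (hx : ∀ j, 1 ≤ j → j ≤ n → 0 < x j) (k : ℕ) : 0 < extSeq n x α k := by
  unfold extSeq
  split
  · exact hx _ (by omega) (by omega)
  · exact hpos _

lemma sq_bddAbove {f : ℕ → ℝ} (hf : ∀ k, 0 ≤ f k) (h : BddAbove (Set.range f)) :
    BddAbove (Set.range fun k => f k ^ 2) := by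
  obtain ⟨C, hC⟩ := h
  refine ⟨(max C 0) ^ 2, ?_⟩
  rintro _ ⟨k, rfl⟩
  exact pow_le_pow_left₀ (hf k) (le_trans (hC ⟨k, rfl⟩) (le_max_left _ _)) 2

lemma extSeq_bddAbove {n : ℕ} (x α : ℕ → ℝ) (h : BddAbove (Set.range α)) :
    BddAbove (Set.range (extSeq n x α)) := by
  have : Set.range (extSeq n x α) ⊆ (x '' (Set.Icc 1 n)) ∪ Set.range α := by
    rintro _ ⟨k, rfl⟩
    unfold extSeq
    split
    · exact Or.inl ⟨n - k, ⟨by omega, by omega⟩, rfl⟩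
    · exact Or.inr ⟨k - n, rfl⟩
  exact (((Set.finite_Icc 1 n).image x).bddAbove.union h).mono this

lemma integral_inv_pow_pos {μ : Measure ℝ} [IsProbabilityMeasure μ]
    (hae : ∀ᵐ t ∂μ, 0 < t) {j : ℕ} (hint : Integrable (fun t => 1 / t ^ j) μ) :
    0 < ∫ t, 1 / t ^ j ∂μ := by
  rw [integral_pos_iff_support_of_nonneg_ae ?nn hint]
  case nn =>
    filter_upwards [hae] with t ht
    positivity
  have hsub : {t : ℝ | 0 < t} ⊆ Function.support fun t => 1 / t ^ j := by
    intro t ht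
    have ht' : (0:ℝ) < t := ht
    have h2 : (1:ℝ)/t^j ≠ 0 := by positivity
    simpa [Function.mem_support] using h2
  have hc : μ ({t : ℝ | 0 < t}ᶜ) = 0 := by
    have h3 := ae_iff.mp hae
    simpa [Set.compl_setOf] using h3
  have h1 : (1 : ENNReal) ≤ μ (Function.support fun t => 1 / t ^ j) := by
    have := measure_univ_le_add_compl (μ := μ) {t : ℝ | 0 < t}
    rw [measure_univ, hc, add_zero] at this
    exact le_trans this (measure_mono hsub)
  exact lt_of_lt_of_le (by norm_num) h1

lemma integrable_inv_pow_le {μ : Measure ℝ} [IsFiniteMeasure μ]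
    (hae : ∀ᵐ t ∂μ, 0 < t) {n : ℕ} (hint : Integrable (fun t => 1 / t ^ n) μ)
    {j : ℕ} (hj : j ≤ n) : Integrable (fun t => 1 / t ^ j) μ := by
  refine Integrable.mono' (hint.add (integrable_const 1))
    ((measurable_const.div (measurable_id.pow_const j)).aestronglyMeasurable) ?_
  filter_upwards [hae] with t ht
  simp only [Pi.add_apply]
  rw [Real.norm_eq_abs, abs_of_nonneg (by positivity)]
  rcases le_or_gt t 1 with h1 | h1
  · have h2 : t ^ n ≤ t ^ j := pow_le_pow_of_le_one ht.le h1 hj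
    have h3 : (1:ℝ) / t ^ j ≤ 1 / t ^ n := by
      apply one_div_le_one_div_of_le (pow_pos ht n) h2
    have h4 : (0:ℝ) < 1 := one_pos
    linarith
  · have h2 : (1:ℝ) ≤ t ^ j := one_le_pow₀ h1.le
    have h3 : (1:ℝ) / t ^ j ≤ 1 := by
      rw [div_le_one (by positivity)]; exact h2
    have h5 : (0:ℝ) ≤ 1 / t ^ n := by positivity
    linarith

lemma measure_ae_mem_of_compl_zero {μ : Measure ℝ} {s : Set ℝ} (h : μ sᶜ = 0) :
    ∀ᵐ t ∂μ, t ∈ s := by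
  rw [ae_iff]
  exact h

lemma integral_withDensity_ofReal {ρ : Measure ℝ} {g : ℝ → ℝ} (hg : Measurable g) (f : ℝ → ℝ) :
    ∫ t, f t ∂(ρ.withDensity fun t => ENNReal.ofReal (g t)) =
      ∫ t, ((g t).toNNReal : ℝ) * f t ∂ρ := by
  have : (fun t => ENNReal.ofReal (g t)) = fun t => ((g t).toNNReal : ENNReal) := rfl
  rw [this, integral_withDensity_eq_integral_smul hg.real_toNNReal]
  simp_rw [NNReal.smul_def, smul_eq_mul]

lemma integrable_withDensity_ofReal_iff {ρ : Measure ℝ} {g : ℝ → ℝ} (hg : Measurable g)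
    (f : ℝ → ℝ) :
    Integrable f (ρ.withDensity fun t => ENNReal.ofReal (g t)) ↔
      Integrable (fun t => ((g t).toNNReal : ℝ) * f t) ρ := by
  have h1 : (fun t => ENNReal.ofReal (g t)) = fun t => ((g t).toNNReal : ENNReal) := rfl
  rw [h1, integrable_withDensity_iff_integrable_smul hg.real_toNNReal]
  simp_rw [NNReal.smul_def, smul_eq_mul]

section Main

variable {α : ℕ → ℝ} {n : ℕ} {x : ℕ → ℝ} {μ : Measure ℝ}

lemma forward_dir (hpos : ∀ k, 0 < α k) (hbdd : BddAbove (Set.range α))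
    (hμ : IsBergerMeasure α μ) (hn : 1 ≤ n) (hx : ∀ j, 1 ≤ j → j ≤ n → 0 < x j)
    (hsub : BergerSubnormal (extSeq n x α)) :
    (μ {0} = 0 ∧ Integrable (fun t => 1 / t ^ n) μ) ∧
      (∀ j, 1 ≤ j → j ≤ n - 1 →
        x j ^ 2 = (∫ t, 1 / t ^ (j - 1) ∂μ) / ∫ t, 1 / t ^ j ∂μ) ∧
      x n ^ 2 ≤ (∫ t, 1 / t ^ (n - 1) ∂μ) / ∫ t, 1 / t ^ n ∂μ := by
  obtain ⟨ν, hν1, hν2, hν3⟩ := hsub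
  obtain ⟨hμ1, hμ2, hμ3⟩ := hμ
  set E := extSeq n x α with hE
  set M := ⨆ k, α k ^ 2 with hM
  set MX := ⨆ k, E k ^ 2 with hMX
  have hEpos : ∀ k, 0 < E k := extSeq_pos hpos hx
  have hE2bdd : BddAbove (Set.range fun k => E k ^ 2) :=
    sq_bddAbove (fun k => (hEpos k).le) (extSeq_bddAbove x α hbdd)
  have hα2bdd : BddAbove (Set.range fun k => α k ^ 2) :=
    sq_bddAbove (fun k => (hpos k).le) hbdd
  have hMMX : M ≤ MX := by
    refine ciSup_le fun k => ?_
    have h1 : α k = E (n + k) := by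
      rw [hE, extSeq_ge n x α (n + k) (by omega)]
      congr 1; omega
    rw [h1]
    exact le_ciSup hE2bdd (n + k)
  have hMX0 : (0:ℝ) ≤ MX := le_trans (sq_nonneg (E 0)) (le_ciSup hE2bdd 0)
  have hνae : ∀ᵐ t ∂ν, t ∈ Set.Icc 0 MX := measure_ae_mem_of_compl_zero hν2
  have hμae : ∀ᵐ t ∂μ, t ∈ Set.Icc 0 M := measure_ae_mem_of_compl_zero hμ2
  have hμaeX : ∀ᵐ t ∂μ, t ∈ Set.Icc 0 MX := by
    filter_upwards [hμae] with t ht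
    exact ⟨ht.1, le_trans ht.2 hMMX⟩
  have hΓpos : ∀ k, 0 < gam E k := gam_pos hEpos
  -- the density t^n / Γ n
  set c : ℝ := gam E n with hc
  have hc0 : 0 < c := hΓpos n
  set g : ℝ → ℝ := fun t => t ^ n / c with hg
  have hgm : Measurable g := (measurable_id.pow_const n).div_const c
  set μ' : Measure ℝ := ν.withDensity fun t => ENNReal.ofReal (g t) with hμ'
  have hμ'fin : IsFiniteMeasure μ' := by
    constructor
    rw [hμ', withDensity_apply _ MeasurableSet.univ, Measure.restrict_univ]
    have hb : ∀ᵐ t ∂ν, ENNReal.ofReal (g t) ≤ ENNReal.ofReal (MX ^ n / c) := by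
      filter_upwards [hνae] with t ht
      refine ENNReal.ofReal_le_ofReal ?_
      show t ^ n / c ≤ MX ^ n / c
      gcongr
      exacts [ht.1, ht.2]
    calc ∫⁻ t, ENNReal.ofReal (g t) ∂ν ≤ ∫⁻ _, ENNReal.ofReal (MX ^ n / c) ∂ν :=
          lintegral_mono_ae hb
      _ = ENNReal.ofReal (MX ^ n / c) * ν Set.univ := lintegral_const _
      _ < ⊤ := ENNReal.mul_lt_top ENNReal.ofReal_lt_top (measure_lt_top ν _)
  -- moments of μ' agree with μ
  have hmom : ∀ m : ℕ, ∫ t, t ^ m ∂μ' = ∫ t, t ^ m ∂μ := by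
    intro m
    rw [hμ', integral_withDensity_ofReal hgm]
    have hcong : ∀ᵐ t ∂ν, ((g t).toNNReal : ℝ) * t ^ m = t ^ (n + m) / c := by
      filter_upwards [hνae] with t ht
      rw [Real.coe_toNNReal _ (div_nonneg (pow_nonneg ht.1 n) hc0.le : (0:ℝ) ≤ g t)]
      show t ^ n / c * t ^ m = t ^ (n + m) / c
      rw [div_mul_eq_mul_div, pow_add]
    rw [integral_congr_ae hcong]
    have : ∫ t, t ^ (n + m) / c ∂ν = (∫ t, t ^ (n + m) ∂ν) / c := integral_div c _
    rw [this, ← hν3 (n + m), gam_add α n m x, ← hE, ← hc]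
    rw [mul_comm, mul_div_assoc, div_self hc0.ne', mul_one, hμ3 m]
  -- μ = μ'
  have hμeq : μ = μ' := by
    have hμ'ae : ∀ᵐ t ∂μ', t ∈ Set.Icc 0 MX := by
      refine measure_ae_mem_of_compl_zero ?_
      have habs : μ' ≪ ν := withDensity_absolutelyContinuous _ _
      exact habs hν2
    exact (ext_of_moments hμ'ae hμaeX (fun k => hmom k)).symm
  -- conclusion components
  have h0 : μ {0} = 0 := by
    rw [hμeq, hμ', withDensity_apply _ (measurableSet_singleton 0)]
    rw [Measure.restrict_singleton]
    rw [lintegral_smul_measure]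
    rw [lintegral_dirac]
    rw [hg]
    simp [zero_pow (by omega : n ≠ 0)]
  have hμpos : ∀ᵐ t ∂μ, 0 < t := by
    have hne : ∀ᵐ t ∂μ, t ≠ 0 := by
      rw [ae_iff]
      simpa using h0
    filter_upwards [hμae, hne] with t ht hne
    exact lt_of_le_of_ne ht.1 (Ne.symm hne)
  haveI : IsProbabilityMeasure μ := hμ1
  -- integrability of 1 / t ^ n with respect to μ
  have hintn : Integrable (fun t => 1 / t ^ n) μ := by
    rw [hμeq, hμ', integrable_withDensity_ofReal_iff hgm _]
    refine integrable_of_ae_bound' (1 / c)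
      ((hgm.real_toNNReal.coe_nnreal_real.mul
        (measurable_const.div (measurable_id.pow_const n))).aestronglyMeasurable) ?_
    filter_upwards [hνae] with t ht
    rcases eq_or_lt_of_le ht.1 with h0 | h0
    · rw [← h0]
      show ‖(((((0:ℝ) ^ n / c).toNNReal : ℝ))) * (1 / (0:ℝ) ^ n)‖ ≤ 1 / c
      rw [zero_pow (by omega : n ≠ 0)]
      simp
      positivity
    · show ‖(((t ^ n / c).toNNReal : ℝ)) * (1 / t ^ n)‖ ≤ 1 / c
      rw [Real.coe_toNNReal _ (div_nonneg (pow_nonneg ht.1 n) hc0.le)]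
      have he : t ^ n / c * (1 / t ^ n) = 1 / c := by
        have h1 : t ^ n ≠ 0 := by positivity
        field_simp
      rw [he, Real.norm_eq_abs, abs_of_nonneg (by positivity)]
  -- the key integral formula for j ≤ n - 1
  have hkey : ∀ j, j ≤ n - 1 → ∫ t, 1 / t ^ j ∂μ = gam E (n - j) / c := by
    intro j hj
    rw [hμeq, hμ', integral_withDensity_ofReal hgm]
    have hcong : ∀ᵐ t ∂ν, (((g t).toNNReal : ℝ)) * (1 / t ^ j) = t ^ (n - j) / c := by
      filter_upwards [hνae] with t ht
      rcases eq_or_lt_of_le ht.1 with h0 | h0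
      · rw [← h0]
        show ((((0:ℝ) ^ n / c).toNNReal : ℝ)) * (1 / (0:ℝ) ^ j) = (0:ℝ) ^ (n - j) / c
        rw [zero_pow (by omega : n ≠ 0), zero_pow (by omega : n - j ≠ 0)]
        simp
      · show (((t ^ n / c).toNNReal : ℝ)) * (1 / t ^ j) = t ^ (n - j) / c
        rw [Real.coe_toNNReal _ (div_nonneg (pow_nonneg ht.1 n) hc0.le)]
        have hsplit : t ^ n = t ^ (n - j) * t ^ j := by
          rw [← pow_add]
          congr 1
          omega
        rw [hsplit]
        have h1 : t ^ j ≠ 0 := by positivity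
        field_simp
    rw [integral_congr_ae hcong, integral_div, ← hν3 (n - j)]
  -- the integral of 1 / t ^ n
  have hνlt : ν {0} ≤ 1 := prob_le_one
  have hkeyn : ∫ t, 1 / t ^ n ∂μ = (1 - (ν {0}).toReal) / c := by
    rw [hμeq, hμ', integral_withDensity_ofReal hgm]
    have hcong : ∀ᵐ t ∂ν, (((g t).toNNReal : ℝ)) * (1 / t ^ n) =
        Set.indicator {(0:ℝ)}ᶜ (fun _ => 1 / c) t := by
      filter_upwards [hνae] with t ht
      rcases eq_or_lt_of_le ht.1 with h0 | h0
      · rw [← h0]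
        show ((((0:ℝ) ^ n / c).toNNReal : ℝ)) * (1 / (0:ℝ) ^ n) =
          Set.indicator {(0:ℝ)}ᶜ (fun _ => 1 / c) 0
        rw [zero_pow (by omega : n ≠ 0), Set.indicator_of_notMem (by simp)]
        simp
      · show (((t ^ n / c).toNNReal : ℝ)) * (1 / t ^ n) =
          Set.indicator {(0:ℝ)}ᶜ (fun _ => 1 / c) t
        rw [Real.coe_toNNReal _ (div_nonneg (pow_nonneg ht.1 n) hc0.le),
          Set.indicator_of_mem (by simpa using h0.ne' : t ∈ ({(0:ℝ)}ᶜ : Set ℝ))]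
        have h1 : t ^ n ≠ 0 := by positivity
        field_simp
    rw [integral_congr_ae hcong, integral_indicator_const _ (measurableSet_singleton (0:ℝ)).compl]
    rw [measureReal_def, measure_compl (measurableSet_singleton 0) (measure_ne_top ν _), measure_univ]
    rw [ENNReal.toReal_sub_of_le hνlt ENNReal.one_ne_top, ENNReal.toReal_one]
    rw [smul_eq_mul, mul_one_div]
  have hBpos : 0 < ∫ t, 1 / t ^ n ∂μ := integral_inv_pow_pos hμpos hintn
  have hIpos : ∀ j, j ≤ n → 0 < ∫ t, 1 / t ^ j ∂μ := fun j hj =>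
    integral_inv_pow_pos hμpos (integrable_inv_pow_le hμpos hintn hj)
  refine ⟨⟨h0, hintn⟩, ?_, ?_⟩
  · intro j hj1 hj2
    have e1 := hkey (j - 1) (by omega)
    have e2 := hkey j (by omega)
    have hEnj : E (n - j) = x j := by
      rw [hE, extSeq_lt n x α (n - j) (by omega)]
      congr 1
      omega
    have hsucc : gam E (n - (j - 1)) = gam E (n - j) * x j ^ 2 := by
      have : n - (j - 1) = (n - j) + 1 := by omega
      rw [this, gam_succ, hEnj]
    have hΓc : gam E (n - j) / c ≠ 0 := ne_of_gt (div_pos (hΓpos _) hc0)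
    rw [e1, e2, hsucc, eq_div_iff hΓc]
    field_simp
  · have e1 := hkey (n - 1) (le_refl _)
    have hn1 : n - (n - 1) = 1 := by omega
    rw [hn1] at e1
    have hΓ1 : gam E 1 = x n ^ 2 := by
      rw [gam, Finset.prod_range_one, hE, extSeq_lt n x α 0 (by omega)]
      congr 2
    set r := (ν {0}).toReal with hr
    have hr0 : 0 ≤ r := ENNReal.toReal_nonneg
    rw [e1, hkeyn]
    have hB' : 0 < (1 - r) / c := by rw [← hkeyn]; exact hBpos
    have hν0' : 0 < 1 - r := by
      by_contra hcon
      push_neg at hcon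
      have hmul : (1 - r) / c * c = 1 - r := div_mul_cancel₀ _ hc0.ne'
      nlinarith
    rw [le_div_iff₀ hB', hΓ1, mul_div_assoc']
    rw [div_le_div_iff_of_pos_right hc0]
    nlinarith [sq_nonneg (x n)]

lemma integrable_dirac' {f : ℝ → ℝ} (hf : StronglyMeasurable f) (p : ℝ) :
    Integrable f (Measure.dirac p) := by
  refine ⟨hf.aestronglyMeasurable, ?_⟩
  rw [HasFiniteIntegral, lintegral_dirac]
  exact ENNReal.coe_lt_top

lemma backward_dir (hpos : ∀ k, 0 < α k) (hbdd : BddAbove (Set.range α))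
    (hμ : IsBergerMeasure α μ) (hn : 1 ≤ n) (hx : ∀ j, 1 ≤ j → j ≤ n → 0 < x j)
    (h0 : μ {0} = 0) (hintn : Integrable (fun t => 1 / t ^ n) μ)
    (hx2 : ∀ j, 1 ≤ j → j ≤ n - 1 →
      x j ^ 2 = (∫ t, 1 / t ^ (j - 1) ∂μ) / ∫ t, 1 / t ^ j ∂μ)
    (hx3 : x n ^ 2 ≤ (∫ t, 1 / t ^ (n - 1) ∂μ) / ∫ t, 1 / t ^ n ∂μ) :
    BergerSubnormal (extSeq n x α) := by
  obtain ⟨hμ1, hμ2, hμ3⟩ := hμ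
  haveI : IsProbabilityMeasure μ := hμ1
  set E := extSeq n x α with hE
  set M := ⨆ k, α k ^ 2 with hM
  set MX := ⨆ k, E k ^ 2 with hMX
  have hEpos : ∀ k, 0 < E k := extSeq_pos hpos hx
  have hE2bdd : BddAbove (Set.range fun k => E k ^ 2) :=
    sq_bddAbove (fun k => (hEpos k).le) (extSeq_bddAbove x α hbdd)
  have hMMX : M ≤ MX := by
    refine ciSup_le fun k => ?_
    have h1 : α k = E (n + k) := by
      rw [hE, extSeq_ge n x α (n + k) (by omega)]
      congr 1; omega
    rw [h1]
    exact le_ciSup hE2bdd (n + k)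
  have hMX0 : (0:ℝ) ≤ MX := le_trans (sq_nonneg (E 0)) (le_ciSup hE2bdd 0)
  have hμae : ∀ᵐ t ∂μ, t ∈ Set.Icc 0 M := measure_ae_mem_of_compl_zero hμ2
  have hμpos : ∀ᵐ t ∂μ, 0 < t := by
    have hne : ∀ᵐ t ∂μ, t ≠ 0 := by
      rw [ae_iff]; simpa using h0
    filter_upwards [hμae, hne] with t ht hne
    exact lt_of_le_of_ne ht.1 (Ne.symm hne)
  have hΓpos : ∀ k, 0 < gam E k := gam_pos hEpos
  set c : ℝ := gam E n with hc
  have hc0 : 0 < c := hΓpos n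
  have hintj : ∀ j, j ≤ n → Integrable (fun t => 1 / t ^ j) μ := fun j hj =>
    integrable_inv_pow_le hμpos hintn hj
  have hIpos : ∀ j, j ≤ n → 0 < ∫ t, 1 / t ^ j ∂μ := fun j hj =>
    integral_inv_pow_pos hμpos (hintj j hj)
  -- key chain
  have claim : ∀ j, j ≤ n - 1 → c * ∫ t, 1 / t ^ j ∂μ = gam E (n - j) := by
    intro j
    induction j with
    | zero =>
      intro _
      simp only [pow_zero, Nat.sub_zero, ← hc]
      rw [show (fun t : ℝ => 1 / (1:ℝ)) = fun _ : ℝ => (1:ℝ) by funext; norm_num]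
      simp
    | succ j ih =>
      intro hj
      have hj' : j ≤ n - 1 := by omega
      have e := hx2 (j + 1) (by omega) (by omega)
      rw [Nat.add_sub_cancel] at e
      have hIj1 := hIpos (j + 1) (by omega)
      have hIj := hIpos j (by omega)
      rw [eq_div_iff hIj1.ne'] at e
      have hxx := hx (j + 1) (by omega) (by omega)
      have hEnj : E (n - (j + 1)) = x (j + 1) := by
        rw [hE, extSeq_lt n x α (n - (j + 1)) (by omega)]
        congr 1
        omega
      have hsucc : gam E (n - j) = gam E (n - (j + 1)) * x (j + 1) ^ 2 := by
        have h1 : n - j = (n - (j + 1)) + 1 := by omega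
        rw [h1, gam_succ, hEnj]
      have hih := ih hj'
      rw [hsucc] at hih
      have hx2pos : (0:ℝ) < x (j + 1) ^ 2 := by positivity
      nlinarith [hih, e]
  set B := ∫ t, 1 / t ^ n ∂μ with hB
  have hB0 : 0 < B := hIpos n (le_refl n)
  -- c * B ≤ 1
  have hcB : c * B ≤ 1 := by
    have e1 := claim (n - 1) (le_refl _)
    have hn1 : n - (n - 1) = 1 := by omega
    rw [hn1] at e1
    have hΓ1 : gam E 1 = x n ^ 2 := by
      rw [gam, Finset.prod_range_one, hE, extSeq_lt n x α 0 (by omega)]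
      congr 2
    rw [hΓ1] at e1
    rw [le_div_iff₀ hB0] at hx3
    have hxn : (0:ℝ) < x n ^ 2 := pow_pos (hx n hn (le_refl n)) 2
    nlinarith
  set a : ℝ := 1 - c * B with ha
  have ha0 : 0 ≤ a := by rw [ha]; linarith
  set d : ℝ → ℝ := fun t => c / t ^ n with hd
  have hdm : Measurable d := measurable_const.div (measurable_id.pow_const n)
  set ν₁ : Measure ℝ := μ.withDensity fun t => ENNReal.ofReal (d t) with hν₁
  set ν : Measure ℝ := ν₁ + (ENNReal.ofReal a) • Measure.dirac 0 with hν
  have hdae : ∀ᵐ t ∂μ, ((d t).toNNReal : ℝ) = c * (1 / t ^ n) := by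
    filter_upwards [hμpos] with t ht
    simp only [hd]
    rw [Real.coe_toNNReal _ (div_nonneg hc0.le (pow_nonneg ht.le n)), mul_one_div]
  refine ⟨ν, ?_, ?_, ?_⟩
  · -- probability
    constructor
    rw [hν, Measure.add_apply, Measure.smul_apply, measure_univ (μ := Measure.dirac (0:ℝ)), smul_eq_mul, mul_one]
    rw [hν₁, withDensity_apply _ MeasurableSet.univ, Measure.restrict_univ]
    have hnn : 0 ≤ᵐ[μ] d := by
      filter_upwards [hμpos] with t ht
      exact div_nonneg hc0.le (pow_nonneg ht.le n)
    have hdint : Integrable d μ := by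
      refine (hintn.const_mul c).congr ?_
      refine ae_of_all _ fun t => ?_
      simp [hd, mul_one_div, div_eq_mul_inv]
    rw [← ofReal_integral_eq_lintegral_ofReal hdint hnn]
    have hdI : ∫ t, d t ∂μ = c * B := by
      rw [hB, ← integral_const_mul]
      refine integral_congr_ae (ae_of_all _ fun t => ?_)
      simp [hd, mul_one_div, div_eq_mul_inv]
    rw [hdI, ← ENNReal.ofReal_add (by positivity) ha0]
    rw [ha]
    norm_num
  · -- support
    rw [hν, Measure.add_apply, Measure.smul_apply]
    have hs : MeasurableSet (Set.Icc (0:ℝ) MX)ᶜ := measurableSet_Icc.compl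
    have hμs : μ (Set.Icc (0:ℝ) MX)ᶜ = 0 := by
      refine measure_mono_null ?_ hμ2
      exact Set.compl_subset_compl.mpr (Set.Icc_subset_Icc_right hMMX)
    rw [hν₁, withDensity_apply _ hs, Measure.restrict_eq_zero.mpr hμs, lintegral_zero_measure]
    rw [Measure.dirac_apply' 0 hs]
    rw [Set.indicator_of_notMem (by simp [Set.mem_Icc, hMX0] : (0:ℝ) ∉ (Set.Icc (0:ℝ) MX)ᶜ)]
    simp
  · -- moments
    intro k
    have hdirac_int : Integrable (fun t : ℝ => t ^ k) ((ENNReal.ofReal a) • Measure.dirac 0) :=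
      (integrable_dirac' (stronglyMeasurable_id.pow k) 0).smul_measure ENNReal.ofReal_ne_top
    have hcongr_int : ∀ (h : ℝ → ℝ), Integrable h μ →
        (∀ᵐ t ∂μ, ((d t).toNNReal : ℝ) * t ^ k = h t) →
        Integrable (fun t : ℝ => t ^ k) ν₁ := by
      intro h hint hcong
      rw [hν₁, integrable_withDensity_ofReal_iff hdm]
      exact hint.congr (by filter_upwards [hcong] with t ht; rw [ht])
    have hsm : ∫ t, t ^ k ∂((ENNReal.ofReal a) • Measure.dirac 0) = a * (0:ℝ) ^ k := by
      rw [integral_smul_measure, integral_dirac, ENNReal.toReal_ofReal ha0, smul_eq_mul]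
    rcases lt_or_ge k n with hk | hk
    · rcases Nat.eq_zero_or_pos k with hk0 | hk0
      · -- k = 0
        subst hk0
        have hcong : ∀ᵐ t ∂μ, ((d t).toNNReal : ℝ) * t ^ 0 = c * (1 / t ^ n) := by
          filter_upwards [hdae] with t ht
          rw [pow_zero, mul_one, ht]
        have hint₁ : Integrable (fun t : ℝ => t ^ 0) ν₁ :=
          hcongr_int _ (hintn.const_mul c) hcong
        rw [hν, integral_add_measure hint₁ hdirac_int, hsm]
        rw [hν₁, integral_withDensity_ofReal hdm, integral_congr_ae hcong,
          integral_const_mul, ← hB]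
        rw [pow_zero, mul_one, gam, Finset.prod_range_zero, ha]
        ring
      · -- 1 ≤ k < n
        have hcong : ∀ᵐ t ∂μ, ((d t).toNNReal : ℝ) * t ^ k = c * (1 / t ^ (n - k)) := by
          filter_upwards [hdae, hμpos] with t ht htp
          rw [ht]
          have hsplit : t ^ n = t ^ (n - k) * t ^ k := by
            rw [← pow_add]; congr 1; omega
          rw [hsplit]
          have h1 : t ^ k ≠ 0 := by positivity
          have h2 : t ^ (n - k) ≠ 0 := by positivity
          field_simp
        have hint₁ : Integrable (fun t : ℝ => t ^ k) ν₁ :=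
          hcongr_int _ ((hintj (n - k) (by omega)).const_mul c) hcong
        rw [hν, integral_add_measure hint₁ hdirac_int, hsm]
        rw [hν₁, integral_withDensity_ofReal hdm, integral_congr_ae hcong,
          integral_const_mul]
        rw [claim (n - k) (by omega)]
        have hnk : n - (n - k) = k := by omega
        rw [hnk, zero_pow (by omega : k ≠ 0), mul_zero, add_zero]
    · -- k ≥ n
      have hcong : ∀ᵐ t ∂μ, ((d t).toNNReal : ℝ) * t ^ k = c * t ^ (k - n) := by
        filter_upwards [hdae, hμpos] with t ht htp
        rw [ht]
        have hsplit : t ^ k = t ^ (k - n) * t ^ n := by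
          rw [← pow_add]; congr 1; omega
        rw [hsplit]
        have h1 : t ^ n ≠ 0 := by positivity
        field_simp
      have hint₁ : Integrable (fun t : ℝ => t ^ k) ν₁ :=
        hcongr_int _ ((integrable_pow_of_ae_Icc hμae (k - n)).const_mul c) hcong
      rw [hν, integral_add_measure hint₁ hdirac_int, hsm]
      rw [hν₁, integral_withDensity_ofReal hdm, integral_congr_ae hcong,
        integral_const_mul]
      rw [← hμ3 (k - n)]
      rw [zero_pow (by omega : k ≠ 0), mul_zero, add_zero]
      rw [hc, ← gam_add α n (k - n) x, ← hE]
      congr 1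
      omega

end Main

end Helpers

theorem stmt_11 (α : ℕ → ℝ) (hpos : ∀ k, 0 < α k) (hbdd : BddAbove (Set.range α))
    (μ : Measure ℝ) (hμ : IsBergerMeasure α μ)
    (n : ℕ) (hn : 1 ≤ n) (x : ℕ → ℝ) (hx : ∀ j, 1 ≤ j → j ≤ n → 0 < x j) :
    BergerSubnormal (extSeq n x α) ↔
      (μ {0} = 0 ∧ Integrable (fun t => 1 / t ^ n) μ) ∧
      (∀ j, 1 ≤ j → j ≤ n - 1 →
        x j ^ 2 = (∫ t, 1 / t ^ (j - 1) ∂μ) / ∫ t, 1 / t ^ j ∂μ) ∧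
      x n ^ 2 ≤ (∫ t, 1 / t ^ (n - 1) ∂μ) / ∫ t, 1 / t ^ n ∂μ := by
  constructor
  · exact fun h => forward_dir hpos hbdd hμ hn hx h
  · rintro ⟨⟨h00, hint⟩, h2, h3⟩
    exact backward_dir hpos hbdd hμ hn hx h00 hint h2 h3
end
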